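/- Let N ≥ 1 be an integer and let α, τ, λ, μ, ω̄ be real numbers with τ + α > 0. Set ρ = 1/(2(τ + α)) and assume 1 − λρ ≠ 0 and 1 + λρ(N−1) ≠ 0. Define a = ρ/(1 − λρ) and b = ρ/(1 + λρ(N−1)). Then for every vector g = (g_1,…,g_N) ∈ ℝ^N, writing Ḡ = (1/N)·Σ_{j=1}^N g_j and s_i = a·(g_i − Ḡ) + b·(Ḡ − μ·ω̄), we have for every i: s_i = ρ·( g_i − μ·ω̄ − λ·Σ_{j ≠ i} s_j ). -/

import Mathlib

/-- Fixed-point verification of the linear Nash equilibrium strategy under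
complete information (Proposition 3). -/
theorem stmt_4 (N : ℕ) (hN : 1 ≤ N) (α τ lam μ ωbar : ℝ)
    (hτα : 0 < τ + α) (ρ a b : ℝ) (hρ : ρ = 1 / (2 * (τ + α)))
    (h1 : 1 - lam * ρ ≠ 0)
    (h2 : 1 + lam * ρ * ((N : ℝ) - 1) ≠ 0)
    (ha : a = ρ / (1 - lam * ρ))
    (hb : b = ρ / (1 + lam * ρ * ((N : ℝ) - 1)))
    (g : Fin N → ℝ) (Gbar : ℝ) (hG : Gbar = (1 / (N : ℝ)) * ∑ j, g j)
    (s : Fin N → ℝ)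
    (hs : ∀ i, s i = a * (g i - Gbar) + b * (Gbar - μ * ωbar)) :
    ∀ i, s i = ρ * (g i - μ * ωbar - lam * ∑ j ∈ Finset.univ.erase i, s j) := by
  intro i
  have hN0 : (N : ℝ) ≠ 0 := Nat.cast_ne_zero.mpr (by omega)
  have hGs : ∑ j, g j = (N : ℝ) * Gbar := by rw [hG]; field_simp
  have ha' : a * (1 - lam * ρ) = ρ := by rw [ha]; exact div_mul_cancel₀ ρ h1
  have hb' : b * (1 + lam * ρ * ((N : ℝ) - 1)) = ρ := by rw [hb]; exact div_mul_cancel₀ ρ h2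
  have hsum : ∑ j, s j = (N : ℝ) * b * (Gbar - μ * ωbar) := by
    calc ∑ j, s j = ∑ j, (a * (g j - Gbar) + b * (Gbar - μ * ωbar)) :=
          Finset.sum_congr rfl fun j _ => hs j
      _ = a * ((∑ j, g j) - (N : ℝ) * Gbar) + (N : ℝ) * (b * (Gbar - μ * ωbar)) := by
          simp [Finset.sum_add_distrib, Finset.sum_sub_distrib, Finset.mul_sum, mul_sub]; ring
      _ = (N : ℝ) * b * (Gbar - μ * ωbar) := by rw [hGs]; ring
  rw [Finset.sum_erase_eq_sub (Finset.mem_univ i), hsum, hs i]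
  linear_combination (g i - Gbar) * ha' + (Gbar - μ * ωbar) * hb'
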